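/- General bound theorem: with the setup of the general formalism, suppose {1,…,m} = A ⊔ B is a partition of the parties into two nonempty sets such that 𝒢_Φ(B) ⊆ 𝒢_Φ(A). Then −log₂( |𝒢_Φ(A)|·|𝒢_Φ(B)| / |𝒢_Φ| ) ≤ E_G(Ψ) − n·log₂|G| ≤ −log₂|𝒢_Φ|. -/

import Mathlib

open scoped BigOperators
open scoped Classical

noncomputable section

namespace GenForm

variable {G : Type} [Group G] [Fintype G] {n m : ℕ}
  {ι : Fin m → Type} [∀ k, Fintype (ι k)] [∀ k, DecidableEq (ι k)]

/-- `O` assigns to every party `k` a unitary representation of 𝒢 = G^{×n} on the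
(concretely modelled) finite-dimensional Hilbert space H_k = (ι k → ℂ). -/
def IsLocalRep (O : (k : Fin m) → (Fin n → G) → Matrix (ι k) (ι k) ℂ) : Prop :=
  ∀ k : Fin m,
    (∀ t, O k t ∈ Matrix.unitaryGroup (ι k) ℂ) ∧
    O k 1 = 1 ∧
    ∀ t u, O k (t * u) = O k t * O k u

/-- The product vector Φ = φ₁ ⊗ ⋯ ⊗ φ_m, as an amplitude function. -/
def prodVec (φ : (k : Fin m) → ι k → ℂ) : ((k : Fin m) → ι k) → ℂ :=
  fun x => ∏ k, φ k (x k)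

/-- The vector O^t Φ = ⊗_k O_k^t φ_k. -/
def actVec (O : (k : Fin m) → (Fin n → G) → Matrix (ι k) (ι k) ℂ)
    (φ : (k : Fin m) → ι k → ℂ) (t : Fin n → G) : ((k : Fin m) → ι k) → ℂ :=
  fun x => ∏ k, ((O k t).mulVec (φ k)) (x k)

/-- The vector O_X^t Φ, where the truncated operator acts as O_k^t for k ∈ X and as
the identity elsewhere. -/
def actVecOn (O : (k : Fin m) → (Fin n → G) → Matrix (ι k) (ι k) ℂ)
    (φ : (k : Fin m) → ι k → ℂ) (X : Finset (Fin m)) (t : Fin n → G) :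
    ((k : Fin m) → ι k) → ℂ :=
  fun x => ∏ k, if k ∈ X then ((O k t).mulVec (φ k)) (x k) else φ k (x k)

/-- Each local vector O_k^t φ_k and O_k^u φ_k is either equal or orthogonal. -/
def OrthCond (O : (k : Fin m) → (Fin n → G) → Matrix (ι k) (ι k) ℂ)
    (φ : (k : Fin m) → ι k → ℂ) : Prop :=
  ∀ (k : Fin m) (t u : Fin n → G),
    (O k t).mulVec (φ k) = (O k u).mulVec (φ k) ∨
    ∑ x : ι k, (starRingEnd ℂ) (((O k t).mulVec (φ k)) x) * ((O k u).mulVec (φ k)) x = 0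

/-- The global stabiliser 𝒢_Φ = { t : O^t Φ = Φ }. -/
def globalStab (O : (k : Fin m) → (Fin n → G) → Matrix (ι k) (ι k) ℂ)
    (φ : (k : Fin m) → ι k → ℂ) : Set (Fin n → G) :=
  { t | actVec O φ t = prodVec φ }

/-- The local stabiliser 𝒢_Φ(X) = { t : O_X^t Φ = Φ }. -/
def localStab (O : (k : Fin m) → (Fin n → G) → Matrix (ι k) (ι k) ℂ)
    (φ : (k : Fin m) → ι k → ℂ) (X : Finset (Fin m)) : Set (Fin n → G) :=
  { t | actVecOn O φ X t = prodVec φ }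

/-- The symmetrized state Ψ = (|𝒢|·|𝒢_Φ|)^{-1/2} ∑_{t∈𝒢} O^t Φ. -/
def Psi (O : (k : Fin m) → (Fin n → G) → Matrix (ι k) (ι k) ℂ)
    (φ : (k : Fin m) → ι k → ℂ) : ((k : Fin m) → ι k) → ℂ :=
  fun x => (((Real.sqrt ((Fintype.card G) ^ n * Nat.card (globalStab O φ)))⁻¹ : ℝ) : ℂ) *
    ∑ t : Fin n → G, actVec O φ t x

/-- A product state of the m parties. -/
def IsProd (Φ : ((k : Fin m) → ι k) → ℂ) : Prop :=
  ∃ χ : (k : Fin m) → ι k → ℂ,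
    (∀ k, ∑ x : ι k, ‖χ k x‖ ^ 2 = 1) ∧
    ∀ x, Φ x = ∏ k, χ k (x k)

/-- Maximal overlap with product states of the parties. -/
def LMax (ψ : ((k : Fin m) → ι k) → ℂ) : ℝ :=
  sSup { r : ℝ | ∃ Φ, IsProd Φ ∧
    r = ‖∑ x : (k : Fin m) → ι k, (starRingEnd ℂ) (Φ x) * ψ x‖ }

/-- Geometric entanglement. -/
def EG (ψ : ((k : Fin m) → ι k) → ℂ) : ℝ :=
  - Real.logb 2 (LMax ψ ^ 2)

end GenForm

namespace GenForm


/-- concrete sesquilinear inner product of amplitude functions -/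
def lip {κ : Type} [Fintype κ] (f g : κ → ℂ) : ℂ :=
  ∑ x, (starRingEnd ℂ) (f x) * g x

lemma lip_self {κ : Type} [Fintype κ] (f : κ → ℂ) :
    lip f f = ((∑ x, ‖f x‖ ^ 2 : ℝ) : ℂ) := by
  rw [lip]
  push_cast
  refine Finset.sum_congr rfl fun x _ => ?_
  rw [mul_comm, Complex.mul_conj, Complex.normSq_eq_norm_sq]
  push_cast
  ring

lemma lip_conj {κ : Type} [Fintype κ] (f g : κ → ℂ) :
    lip g f = (starRingEnd ℂ) (lip f g) := by
  rw [lip, lip, map_sum]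
  refine Finset.sum_congr rfl fun x _ => ?_
  simp [mul_comm]

lemma abs_lip_comm {κ : Type} [Fintype κ] (f g : κ → ℂ) :
    ‖lip g f‖ = ‖lip f g‖ := by
  rw [lip_conj, Complex.norm_conj]

/-- unitary matrices preserve lip -/
lemma lip_mulVec {κ : Type} [Fintype κ] [DecidableEq κ] (U : Matrix κ κ ℂ)
    (hU : U ∈ Matrix.unitaryGroup κ ℂ) (f g : κ → ℂ) :
    lip (U.mulVec f) (U.mulVec g) = lip f g := by
  have h1 : star U * U = 1 := (Matrix.mem_unitaryGroup_iff').1 hU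
  have : lip (U.mulVec f) (U.mulVec g)
      = dotProduct (star (U.mulVec f)) (U.mulVec g) := by
    simp [lip, dotProduct, Pi.star_apply]
  rw [this, Matrix.star_mulVec, ← Matrix.dotProduct_mulVec,
    Matrix.mulVec_mulVec, ← Matrix.star_eq_conjTranspose, h1, Matrix.one_mulVec]
  simp [lip, dotProduct, Pi.star_apply]

/-- product formula for lip of product vectors -/
lemma lip_prodVec {m : ℕ} {ι : Fin m → Type} [∀ k, Fintype (ι k)]
    (f g : (k : Fin m) → ι k → ℂ) :
    lip (prodVec f) (prodVec g) = ∏ k, lip (f k) (g k) := by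
  unfold lip prodVec
  have : ∀ k : Fin m, (∑ x : ι k, (starRingEnd ℂ) (f k x) * g k x)
      = ∑ x ∈ (Finset.univ : Finset (ι k)), (starRingEnd ℂ) (f k x) * g k x := fun _ => rfl
  rw [Finset.prod_congr rfl fun k _ => this k, Finset.prod_univ_sum, Fintype.piFinset_univ]
  refine Finset.sum_congr rfl fun x _ => ?_
  rw [map_prod, ← Finset.prod_mul_distrib]



def toE {κ : Type} [Fintype κ] (f : κ → ℂ) : EuclideanSpace ℂ κ :=
  (WithLp.equiv 2 (κ → ℂ)).symm f

lemma inner_toE {κ : Type} [Fintype κ] (f g : κ → ℂ) :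
    (inner ℂ (toE f) (toE g) : ℂ) = lip f g := by
  rw [PiLp.inner_apply]
  refine Finset.sum_congr rfl fun x _ => ?_
  rw [RCLike.inner_apply']
  rfl

lemma norm_toE_sq {κ : Type} [Fintype κ] (f : κ → ℂ)
    (hf : ∑ x, ‖f x‖ ^ 2 = 1) : ‖toE f‖ ^ 2 = 1 := by
  have h := inner_self_eq_norm_sq_to_K (𝕜 := ℂ) (toE f)
  rw [inner_toE, lip_self, hf] at h
  have h2 : ((‖toE f‖ ^ 2 : ℝ) : ℂ) = ((1:ℝ) : ℂ) := by push_cast; exact h.symm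
  exact_mod_cast h2

lemma natCard_set_eq_filter {α : Type} [Fintype α] (S : Set α) :
    Nat.card S = (Finset.univ.filter (· ∈ S)).card := by
  rw [Nat.card_eq_fintype_card]
  exact Fintype.card_subtype _

section Stab

variable {G : Type} [Group G] [Fintype G] {n m : ℕ}
  {ι : Fin m → Type} [∀ k, Fintype (ι k)] [∀ k, DecidableEq (ι k)]
  (O : (k : Fin m) → (Fin n → G) → Matrix (ι k) (ι k) ℂ)
  (φ : (k : Fin m) → ι k → ℂ)

lemma actVecOn_eq_prodVec (X : Finset (Fin m)) (t : Fin n → G) :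
    actVecOn O φ X t = prodVec (fun k => if k ∈ X then (O k t).mulVec (φ k) else φ k) := by
  funext x
  unfold actVecOn prodVec
  exact Finset.prod_congr rfl fun k _ => by by_cases h : k ∈ X <;> simp [h]

lemma actVec_eq_prodVec (t : Fin n → G) :
    actVec O φ t = prodVec (fun k => (O k t).mulVec (φ k)) := rfl

lemma lip_w_self (hO : IsLocalRep O) (hφ : ∀ k, ∑ x, ‖φ k x‖ ^ 2 = 1)
    (k : Fin m) (t : Fin n → G) :
    lip ((O k t).mulVec (φ k)) ((O k t).mulVec (φ k)) = 1 := by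
  rw [lip_mulVec _ ((hO k).1 t), lip_self, hφ k]
  norm_num

lemma lip_w_ne (horth : OrthCond O φ) {k : Fin m} {t u : Fin n → G}
    (h : (O k t).mulVec (φ k) ≠ (O k u).mulVec (φ k)) :
    lip ((O k t).mulVec (φ k)) ((O k u).mulVec (φ k)) = 0 := by
  rcases horth k t u with h' | h'
  · exact absurd h' h
  · exact h'

lemma w_one (hO : IsLocalRep O) (k : Fin m) :
    (O k (1 : Fin n → G)).mulVec (φ k) = φ k := by
  rw [(hO k).2.1, Matrix.one_mulVec]

lemma localStab_eq (hO : IsLocalRep O) (hφ : ∀ k, ∑ x, ‖φ k x‖ ^ 2 = 1)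
    (horth : OrthCond O φ) (X : Finset (Fin m)) :
    localStab O φ X = {t | ∀ k ∈ X, (O k t).mulVec (φ k) = φ k} := by
  ext t
  simp only [localStab, Set.mem_setOf_eq]
  constructor
  · intro ht
    by_contra hc
    push_neg at hc
    obtain ⟨k0, hk0, hne⟩ := hc
    have h1 : lip (prodVec φ) (actVecOn O φ X t) = 1 := by
      rw [ht, lip_prodVec]
      refine Finset.prod_eq_one fun k _ => ?_
      rw [lip_self, hφ k]
      norm_num
    have h0 : lip (prodVec φ) (actVecOn O φ X t) = 0 := by
      rw [actVecOn_eq_prodVec, lip_prodVec]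
      refine Finset.prod_eq_zero (Finset.mem_univ k0) ?_
      rw [if_pos hk0]
      have hne' : (O k0 (1 : Fin n → G)).mulVec (φ k0) ≠ (O k0 t).mulVec (φ k0) := by
        rw [w_one O φ hO k0]
        exact fun hh => hne hh.symm
      have := lip_w_ne O φ horth hne'
      rwa [w_one O φ hO k0] at this
    rw [h1] at h0
    exact one_ne_zero h0
  · intro h
    funext x
    unfold actVecOn prodVec
    refine Finset.prod_congr rfl fun k _ => ?_
    by_cases hk : k ∈ X
    · rw [if_pos hk, h k hk]
    · rw [if_neg hk]

lemma globalStab_eq_localStab : globalStab O φ = localStab O φ Finset.univ := by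
  ext t
  simp only [globalStab, localStab, Set.mem_setOf_eq]
  have : actVecOn O φ Finset.univ t = actVec O φ t := by
    funext x
    unfold actVecOn actVec
    exact Finset.prod_congr rfl fun k _ => if_pos (Finset.mem_univ k)
  rw [this]

lemma w_mul (hO : IsLocalRep O) (k : Fin m) (a b : Fin n → G) :
    (O k (a * b)).mulVec (φ k) = (O k a).mulVec ((O k b).mulVec (φ k)) := by
  rw [(hO k).2.2, ← Matrix.mulVec_mulVec]

lemma w_cancel (hO : IsLocalRep O) (k : Fin m) (a : Fin n → G) {x y : ι k → ℂ}
    (h : (O k a).mulVec x = (O k a).mulVec y) : x = y := by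
  have h2 := congrArg ((O k a⁻¹).mulVec) h
  rwa [Matrix.mulVec_mulVec, Matrix.mulVec_mulVec, ← (hO k).2.2, inv_mul_cancel,
    (hO k).2.1, Matrix.one_mulVec, Matrix.one_mulVec] at h2

lemma fiber_card (hO : IsLocalRep O) (X : Finset (Fin m)) (t : Fin n → G) :
    (Finset.univ.filter fun u : Fin n → G =>
        ∀ k ∈ X, (O k u).mulVec (φ k) = (O k t).mulVec (φ k)).card
      = (Finset.univ.filter fun s : Fin n → G =>
        ∀ k ∈ X, (O k s).mulVec (φ k) = φ k).card := by
  symm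
  refine Finset.card_nbij (fun s => t * s) ?_ ?_ ?_
  · intro s hs
    simp only [Finset.coe_filter, Finset.mem_filter, Finset.mem_univ, true_and,
      Set.mem_setOf_eq] at hs ⊢
    intro k hk
    rw [w_mul O φ hO, hs k hk]
  · intro s₁ _ s₂ _ h
    exact mul_left_cancel h
  · intro u hu
    simp only [Finset.coe_filter, Finset.mem_filter, Finset.mem_univ, true_and,
      Set.mem_setOf_eq, Set.mem_image] at hu ⊢
    refine ⟨t⁻¹ * u, ?_, by group⟩
    intro k hk
    refine w_cancel O hO k t ?_
    rw [← w_mul O φ hO, mul_inv_cancel_left, hu k hk]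

lemma norm_toE_sq' {κ : Type} [Fintype κ] (f : κ → ℂ)
    (hf : lip f f = 1) : ‖toE f‖ ^ 2 = 1 := by
  have h := inner_self_eq_norm_sq_to_K (𝕜 := ℂ) (toE f)
  rw [inner_toE, hf] at h
  have h2 : ((‖toE f‖ ^ 2 : ℝ) : ℂ) = ((1:ℝ) : ℂ) := by push_cast; exact h.symm
  exact_mod_cast h2

lemma sum_prod_sq_le (hO : IsLocalRep O)
    (hφ : ∀ k, ∑ x, ‖φ k x‖ ^ 2 = 1)
    (horth : OrthCond O φ) (X : Finset (Fin m))
    (χ : (k : Fin m) → ι k → ℂ) (hχ : ∀ k, ∑ x, ‖χ k x‖ ^ 2 = 1) :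
    ∑ t : Fin n → G, ∏ k ∈ X, ‖lip (χ k) ((O k t).mulVec (φ k))‖ ^ 2
      ≤ (Nat.card (localStab O φ X) : ℝ) := by
  classical
  set w : (k : Fin m) → (Fin n → G) → ι k → ℂ := fun k t => (O k t).mulVec (φ k) with hw
  set F : (Fin n → G) → ((k : Fin m) → ι k → ℂ) :=
    fun t k => if k ∈ X then w k t else χ k with hF
  set h : ((k : Fin m) → ι k → ℂ) → ℝ :=
    fun v => ∏ k ∈ X, ‖lip (χ k) (v k)‖ ^ 2 with hh
  have hFeq : ∀ t u : Fin n → G, F u = F t ↔ ∀ k ∈ X, w k u = w k t := by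
    intro t u
    constructor
    · intro heq k hk
      have := congrFun heq k
      simpa [hF, if_pos hk] using this
    · intro hall
      funext k
      by_cases hk : k ∈ X
      · simp only [hF, if_pos hk]
        exact hall k hk
      · simp only [hF, if_neg hk]
  have hsummand : ∀ t, (∏ k ∈ X, ‖lip (χ k) (w k t)‖ ^ 2) = h (F t) := by
    intro t
    refine Finset.prod_congr rfl fun k hk => ?_
    simp only [hF, if_pos hk]
  have hcard : ∀ v ∈ Finset.univ.image F,
      (Finset.univ.filter fun t => F t = v).card = Nat.card (localStab O φ X) := by
    intro v hv
    obtain ⟨t, _, ht⟩ := Finset.mem_image.1 hv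
    have e1 : (Finset.univ.filter fun u => F u = v)
        = Finset.univ.filter fun u : Fin n → G => ∀ k ∈ X, w k u = w k t := by
      refine Finset.filter_congr fun u _ => ?_
      rw [← ht, hFeq]
    have e2 : Nat.card (localStab O φ X)
        = (Finset.univ.filter fun s : Fin n → G => ∀ k ∈ X, w k s = φ k).card := by
      rw [localStab_eq O φ hO hφ horth X, natCard_set_eq_filter]
      refine congrArg Finset.card ?_
      ext s
      simp only [Finset.mem_filter, Set.mem_setOf_eq, hw]
    rw [e1, e2, fiber_card O φ hO X t]
  have hbessel : ∑ v ∈ Finset.univ.image F, h v ≤ 1 := by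
    set I := Finset.univ.image F with hI
    set e : {v // v ∈ I} → EuclideanSpace ℂ ((k : Fin m) → ι k) :=
      fun v => toE (prodVec v.1) with he
    have hinner : ∀ v v' : {x // x ∈ I},
        (inner ℂ (e v) (e v') : ℂ) = ∏ k ∈ X, lip (v.1 k) (v'.1 k) := by
      intro v v'
      rw [he]
      simp only
      rw [inner_toE, lip_prodVec, ← Finset.prod_mul_prod_compl X]
      have hone : ∀ k ∈ Xᶜ, lip (v.1 k) (v'.1 k) = 1 := by
        intro k hk
        have hk' : k ∉ X := by simpa using hk
        obtain ⟨t, _, ht⟩ := Finset.mem_image.1 v.2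
        obtain ⟨u, _, hu⟩ := Finset.mem_image.1 v'.2
        rw [← ht, ← hu]
        simp only [hF, if_neg hk']
        rw [lip_self, hχ k]
        norm_num
      rw [Finset.prod_congr rfl hone, Finset.prod_const_one, mul_one]
    have horthon : Orthonormal ℂ e := by
      rw [orthonormal_iff_ite]
      intro v v'
      rw [hinner]
      by_cases hvv : v = v'
      · subst hvv
        rw [if_pos rfl]
        refine Finset.prod_eq_one fun k hk => ?_
        obtain ⟨t, _, ht⟩ := Finset.mem_image.1 v.2
        rw [← ht]
        simp only [hF, if_pos hk]
        exact lip_w_self O φ hO hφ k t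
      · rw [if_neg hvv]
        obtain ⟨t, _, ht⟩ := Finset.mem_image.1 v.2
        obtain ⟨u, _, hu⟩ := Finset.mem_image.1 v'.2
        have hex : ∃ k ∈ X, w k t ≠ w k u := by
          by_contra hcon
          push_neg at hcon
          exact hvv (Subtype.ext (by rw [← ht, ← hu]; exact (hFeq u t).2 hcon))
        obtain ⟨k0, hk0, hne⟩ := hex
        refine Finset.prod_eq_zero hk0 ?_
        rw [← ht, ← hu]
        simp only [hF, if_pos hk0]
        exact lip_w_ne O φ horth hne
    have hterm : ∀ i : {x // x ∈ I},
        ‖(inner ℂ (e i) (toE (prodVec χ)) : ℂ)‖ ^ 2 = h i.1 := by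
      intro i
      obtain ⟨t, _, ht⟩ := Finset.mem_image.1 i.2
      rw [he]
      simp only
      rw [inner_toE, lip_prodVec, ← Finset.prod_mul_prod_compl X]
      have hone : ∀ k ∈ Xᶜ, lip (i.1 k) (χ k) = 1 := by
        intro k hk
        have hk' : k ∉ X := by simpa using hk
        rw [← ht]
        simp only [hF, if_neg hk']
        rw [lip_self, hχ k]
        norm_num
      rw [Finset.prod_congr rfl hone, Finset.prod_const_one, mul_one]
      rw [hh]
      simp only
      rw [Complex.norm_prod, ← Finset.prod_pow]
      exact Finset.prod_congr rfl fun k _ => by rw [abs_lip_comm]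
    have hχnorm : ‖toE (prodVec χ)‖ ^ 2 = 1 := by
      refine norm_toE_sq' _ ?_
      rw [lip_prodVec]
      refine Finset.prod_eq_one fun k _ => ?_
      rw [lip_self, hχ k]
      norm_num
    calc ∑ v ∈ I, h v = ∑ i : {x // x ∈ I}, h i.1 := (Finset.sum_coe_sort I h).symm
      _ = ∑ i : {x // x ∈ I}, ‖(inner ℂ (e i) (toE (prodVec χ)) : ℂ)‖ ^ 2 :=
          Finset.sum_congr rfl fun i _ => (hterm i).symm
      _ ≤ ‖toE (prodVec χ)‖ ^ 2 := Orthonormal.sum_inner_products_le _ horthon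
      _ = 1 := hχnorm
  calc ∑ t : Fin n → G, ∏ k ∈ X, ‖lip (χ k) (w k t)‖ ^ 2
      = ∑ t : Fin n → G, h (F t) := Finset.sum_congr rfl fun t _ => hsummand t
    _ = ∑ v ∈ Finset.univ.image F, (Finset.univ.filter fun t => F t = v).card • h v :=
        Finset.sum_comp h F
    _ = ∑ v ∈ Finset.univ.image F, (Nat.card (localStab O φ X) : ℝ) * h v := by
        refine Finset.sum_congr rfl fun v hv => ?_
        rw [hcard v hv, nsmul_eq_mul]
    _ = (Nat.card (localStab O φ X) : ℝ) * ∑ v ∈ Finset.univ.image F, h v := by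
        rw [Finset.mul_sum]
    _ ≤ (Nat.card (localStab O φ X) : ℝ) * 1 := by
        refine mul_le_mul_of_nonneg_left hbessel (by positivity)
    _ = _ := mul_one _

lemma overlap_eq (χ : (k : Fin m) → ι k → ℂ) :
    ∑ x : (k : Fin m) → ι k, (starRingEnd ℂ) (prodVec χ x) * Psi O φ x
      = (((Real.sqrt ((Fintype.card G) ^ n * Nat.card (globalStab O φ)))⁻¹ : ℝ) : ℂ) *
        ∑ t : Fin n → G, ∏ k, lip (χ k) ((O k t).mulVec (φ k)) := by
  set c : ℂ := (((Real.sqrt ((Fintype.card G) ^ n * Nat.card (globalStab O φ)))⁻¹ : ℝ) : ℂ)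
    with hc
  have e1 : ∀ x, (starRingEnd ℂ) (prodVec χ x) * Psi O φ x
      = ∑ t : Fin n → G, c * ((starRingEnd ℂ) (prodVec χ x) * actVec O φ t x) := by
    intro x
    unfold Psi
    rw [← hc, Finset.mul_sum, Finset.mul_sum]
    exact Finset.sum_congr rfl fun t _ => by ring
  rw [Finset.sum_congr rfl fun x _ => e1 x, Finset.sum_comm, Finset.mul_sum]
  refine Finset.sum_congr rfl fun t _ => ?_
  rw [← Finset.mul_sum]
  congr 1
  have e2 : (∑ x : (k : Fin m) → ι k, (starRingEnd ℂ) (prodVec χ x) * actVec O φ t x)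
      = lip (prodVec χ) (actVec O φ t) := rfl
  rw [e2, actVec_eq_prodVec, lip_prodVec]

lemma sum_tau (hO : IsLocalRep O) (hφ : ∀ k, ∑ x, ‖φ k x‖ ^ 2 = 1)
    (horth : OrthCond O φ) :
    ∑ t : Fin n → G, ∏ k, lip (φ k) ((O k t).mulVec (φ k))
      = (Nat.card (globalStab O φ) : ℂ) := by
  classical
  have e1 : ∀ t : Fin n → G, (∏ k, lip (φ k) ((O k t).mulVec (φ k)))
      = if (∀ k, (O k t).mulVec (φ k) = φ k) then 1 else 0 := by
    intro t
    by_cases h : ∀ k, (O k t).mulVec (φ k) = φ k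
    · rw [if_pos h]
      refine Finset.prod_eq_one fun k _ => ?_
      rw [h k, lip_self, hφ k]
      norm_num
    · rw [if_neg h]
      push_neg at h
      obtain ⟨k0, hk0⟩ := h
      refine Finset.prod_eq_zero (Finset.mem_univ k0) ?_
      have hne : (O k0 (1 : Fin n → G)).mulVec (φ k0) ≠ (O k0 t).mulVec (φ k0) := by
        rw [w_one O φ hO k0]
        exact fun hh => hk0 hh.symm
      have h0 := lip_w_ne O φ horth hne
      rwa [w_one O φ hO k0] at h0
  rw [Finset.sum_congr rfl fun t _ => e1 t, Finset.sum_boole]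
  congr 1
  rw [globalStab_eq_localStab, localStab_eq O φ hO hφ horth, natCard_set_eq_filter]
  refine congrArg Finset.card ?_
  ext t
  simp only [Finset.mem_filter, Finset.mem_univ, true_and, Set.mem_setOf_eq]
  exact ⟨fun h k _ => h k, fun h k => h k trivial⟩

lemma one_mem_localStab (hO : IsLocalRep O) (X : Finset (Fin m)) :
    (1 : Fin n → G) ∈ localStab O φ X := by
  show actVecOn O φ X 1 = prodVec φ
  funext x
  unfold actVecOn prodVec
  refine Finset.prod_congr rfl fun k _ => ?_
  by_cases hk : k ∈ X
  · rw [if_pos hk, w_one O φ hO k]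
  · rw [if_neg hk]

lemma localStab_card_pos (hO : IsLocalRep O) (X : Finset (Fin m)) :
    0 < Nat.card (localStab O φ X) := by
  rw [natCard_set_eq_filter]
  refine Finset.card_pos.2 ⟨1, ?_⟩
  simp only [Finset.mem_filter, Finset.mem_univ, true_and]
  exact one_mem_localStab O φ hO X

lemma globalStab_card_pos (hO : IsLocalRep O) :
    0 < Nat.card (globalStab O φ) := by
  rw [globalStab_eq_localStab]
  exact localStab_card_pos O φ hO _

lemma abs_sum_le (hO : IsLocalRep O) (hφ : ∀ k, ∑ x, ‖φ k x‖ ^ 2 = 1)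
    (horth : OrthCond O φ) (A : Finset (Fin m))
    (χ : (k : Fin m) → ι k → ℂ) (hχ : ∀ k, ∑ x, ‖χ k x‖ ^ 2 = 1) :
    ‖∑ t : Fin n → G, ∏ k, lip (χ k) ((O k t).mulVec (φ k))‖
      ≤ Real.sqrt (Nat.card (localStab O φ A))
        * Real.sqrt (Nat.card (localStab O φ Aᶜ)) := by
  classical
  have hSA : ∑ t : Fin n → G,
      ‖∏ k ∈ A, lip (χ k) ((O k t).mulVec (φ k))‖ ^ 2
      ≤ (Nat.card (localStab O φ A) : ℝ) := by
    have e : ∀ t : Fin n → G,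
        ‖∏ k ∈ A, lip (χ k) ((O k t).mulVec (φ k))‖ ^ 2
        = ∏ k ∈ A, ‖lip (χ k) ((O k t).mulVec (φ k))‖ ^ 2 := by
      intro t
      rw [Complex.norm_prod, ← Finset.prod_pow]
    rw [Finset.sum_congr rfl fun t _ => e t]
    exact sum_prod_sq_le O φ hO hφ horth A χ hχ
  have hSB : ∑ t : Fin n → G,
      ‖∏ k ∈ Aᶜ, lip (χ k) ((O k t).mulVec (φ k))‖ ^ 2
      ≤ (Nat.card (localStab O φ Aᶜ) : ℝ) := by
    have e : ∀ t : Fin n → G,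
        ‖∏ k ∈ Aᶜ, lip (χ k) ((O k t).mulVec (φ k))‖ ^ 2
        = ∏ k ∈ Aᶜ, ‖lip (χ k) ((O k t).mulVec (φ k))‖ ^ 2 := by
      intro t
      rw [Complex.norm_prod, ← Finset.prod_pow]
    rw [Finset.sum_congr rfl fun t _ => e t]
    exact sum_prod_sq_le O φ hO hφ horth Aᶜ χ hχ
  have hsplit : ∀ t : Fin n → G,
      (∏ k, lip (χ k) ((O k t).mulVec (φ k)))
        = (∏ k ∈ A, lip (χ k) ((O k t).mulVec (φ k)))
          * (∏ k ∈ Aᶜ, lip (χ k) ((O k t).mulVec (φ k))) := fun t =>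
    (Finset.prod_mul_prod_compl A _).symm
  have hCS : ∑ t : Fin n → G,
        ‖∏ k ∈ A, lip (χ k) ((O k t).mulVec (φ k))‖
          * ‖∏ k ∈ Aᶜ, lip (χ k) ((O k t).mulVec (φ k))‖
      ≤ Real.sqrt (∑ t : Fin n → G,
            ‖∏ k ∈ A, lip (χ k) ((O k t).mulVec (φ k))‖ ^ 2)
        * Real.sqrt (∑ t : Fin n → G,
            ‖∏ k ∈ Aᶜ, lip (χ k) ((O k t).mulVec (φ k))‖ ^ 2) := by
    have h1 := Finset.sum_mul_sq_le_sq_mul_sq Finset.univ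
      (fun t => ‖∏ k ∈ A, lip (χ k) ((O k t).mulVec (φ k))‖)
      (fun t => ‖∏ k ∈ Aᶜ, lip (χ k) ((O k t).mulVec (φ k))‖)
    have h2 : (0:ℝ) ≤ ∑ t : Fin n → G,
        ‖∏ k ∈ A, lip (χ k) ((O k t).mulVec (φ k))‖
          * ‖∏ k ∈ Aᶜ, lip (χ k) ((O k t).mulVec (φ k))‖ := by
      positivity
    have h3 := Real.sqrt_le_sqrt h1
    rwa [Real.sqrt_sq h2, Real.sqrt_mul (by positivity)] at h3
  calc ‖∑ t : Fin n → G, ∏ k, lip (χ k) ((O k t).mulVec (φ k))‖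
      ≤ ∑ t : Fin n → G, ‖∏ k, lip (χ k) ((O k t).mulVec (φ k))‖ :=
        norm_sum_le _ _
    _ = ∑ t : Fin n → G,
          ‖∏ k ∈ A, lip (χ k) ((O k t).mulVec (φ k))‖
            * ‖∏ k ∈ Aᶜ, lip (χ k) ((O k t).mulVec (φ k))‖ := by
        refine Finset.sum_congr rfl fun t _ => ?_
        rw [hsplit t, norm_mul]
    _ ≤ Real.sqrt (∑ t : Fin n → G,
            ‖∏ k ∈ A, lip (χ k) ((O k t).mulVec (φ k))‖ ^ 2)
          * Real.sqrt (∑ t : Fin n → G,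
            ‖∏ k ∈ Aᶜ, lip (χ k) ((O k t).mulVec (φ k))‖ ^ 2) := hCS
    _ ≤ Real.sqrt (Nat.card (localStab O φ A))
          * Real.sqrt (Nat.card (localStab O φ Aᶜ)) :=
        mul_le_mul (Real.sqrt_le_sqrt hSA) (Real.sqrt_le_sqrt hSB)
          (Real.sqrt_nonneg _) (Real.sqrt_nonneg _)

end Stab

end GenForm

namespace GenForm

set_option maxHeartbeats 2000000 in
/-- General bound theorem: if the parties split into two nonempty sets
A and B = Aᶜ with 𝒢_Φ(B) ⊆ 𝒢_Φ(A), then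
−log₂(|𝒢_Φ(A)|·|𝒢_Φ(B)|/|𝒢_Φ|) ≤ E_G(Ψ) − n·log₂|G| ≤ −log₂|𝒢_Φ|. -/
theorem general_bound
    {G : Type} [Group G] [Fintype G] {n m : ℕ}
    {ι : Fin m → Type} [∀ k, Fintype (ι k)] [∀ k, DecidableEq (ι k)]
    (O : (k : Fin m) → (Fin n → G) → Matrix (ι k) (ι k) ℂ) (hO : IsLocalRep O)
    (φ : (k : Fin m) → ι k → ℂ) (hφ : ∀ k, ∑ x : ι k, ‖φ k x‖ ^ 2 = 1)
    (horth : OrthCond O φ)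
    (A : Finset (Fin m)) (hA : A.Nonempty) (hB : Aᶜ.Nonempty)
    (hsub : localStab O φ Aᶜ ⊆ localStab O φ A) :
    - Real.logb 2 (((Nat.card (localStab O φ A) : ℝ) *
          (Nat.card (localStab O φ Aᶜ) : ℝ)) / (Nat.card (globalStab O φ) : ℝ)) ≤
        EG (Psi O φ) - (n : ℝ) * Real.logb 2 (Fintype.card G) ∧
      EG (Psi O φ) - (n : ℝ) * Real.logb 2 (Fintype.card G) ≤
        - Real.logb 2 (Nat.card (globalStab O φ) : ℝ) := by
  classical
  set p : ℝ := (Nat.card (globalStab O φ) : ℝ) with hp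
  set a : ℝ := (Nat.card (localStab O φ A) : ℝ) with ha
  set b : ℝ := (Nat.card (localStab O φ Aᶜ) : ℝ) with hb
  have hppos : 0 < p := by
    rw [hp]; exact_mod_cast globalStab_card_pos O φ hO
  have hapos : 0 < a := by
    rw [ha]; exact_mod_cast localStab_card_pos O φ hO A
  have hbpos : 0 < b := by
    rw [hb]; exact_mod_cast localStab_card_pos O φ hO Aᶜ
  have hgpos : (0:ℝ) < (Fintype.card G : ℝ) := by exact_mod_cast Fintype.card_pos
  set pn : ℝ := (Fintype.card G : ℝ) ^ n with hpn
  have hpnpos : 0 < pn := by rw [hpn]; positivity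
  set c : ℝ := (Real.sqrt (pn * p))⁻¹ with hc
  have hcpos : 0 < c := by
    rw [hc]
    exact inv_pos.2 (Real.sqrt_pos.2 (by positivity))
  set S : Set ℝ := {r : ℝ | ∃ Φ, IsProd Φ ∧
    r = ‖∑ x : (k : Fin m) → ι k, (starRingEnd ℂ) (Φ x) * Psi O φ x‖} with hS
  set Λ : ℝ := LMax (Psi O φ) with hΛ
  have hΛS : Λ = sSup S := by rw [hΛ, hS]; rfl
  set U : ℝ := Real.sqrt a * Real.sqrt b * c with hU
  have hUpos : 0 < U := by rw [hU]; positivity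
  -- upper bound for every element of S
  have hub : ∀ r ∈ S, r ≤ U := by
    intro r hr
    obtain ⟨Φ', ⟨χ, hχn, hχe⟩, hre⟩ := hr
    have hΦ' : Φ' = prodVec χ := funext fun x => hχe x
    rw [hre, hΦ', overlap_eq O φ χ, norm_mul, Complex.norm_real, Real.norm_eq_abs,
      abs_of_nonneg (by positivity)]
    have key : ‖∑ t : Fin n → G, ∏ k, lip (χ k) ((O k t).mulVec (φ k))‖
        ≤ Real.sqrt a * Real.sqrt b := by
      rw [ha, hb]
      exact abs_sum_le O φ hO hφ horth A χ hχn
    calc (Real.sqrt ((Fintype.card G : ℝ) ^ n * (Nat.card (globalStab O φ) : ℝ)))⁻¹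
          * ‖∑ t : Fin n → G, ∏ k, lip (χ k) ((O k t).mulVec (φ k))‖
        = c * ‖∑ t : Fin n → G, ∏ k, lip (χ k) ((O k t).mulVec (φ k))‖ := rfl
      _ ≤ c * (Real.sqrt a * Real.sqrt b) := mul_le_mul_of_nonneg_left key hcpos.le
      _ = U := by rw [hU]; ring
  -- the member given by Φ itself
  have hmemval : ‖∑ x : (k : Fin m) → ι k,
      (starRingEnd ℂ) (prodVec φ x) * Psi O φ x‖ = p * c := by
    rw [overlap_eq O φ φ, sum_tau O φ hO hφ horth, norm_mul, Complex.norm_real, Real.norm_eq_abs,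
      Complex.norm_natCast, abs_of_nonneg (by positivity)]
    rw [hp, hc]
    ring
  have hmem : p * c ∈ S := ⟨prodVec φ, ⟨φ, hφ, fun x => rfl⟩, hmemval.symm⟩
  have hbdd : BddAbove S := ⟨U, fun r hr => hub r hr⟩
  have hlb : p * c ≤ Λ := by rw [hΛS]; exact le_csSup hbdd hmem
  have hub' : Λ ≤ U := by rw [hΛS]; exact Real.sSup_le hub hUpos.le
  have hΛpos : 0 < Λ := lt_of_lt_of_le (by positivity) hlb
  have hcsq : c ^ 2 = (pn * p)⁻¹ := by
    rw [hc, inv_pow, Real.sq_sqrt (by positivity)]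
  have hlow : p / pn ≤ Λ ^ 2 := by
    have h1 : (p * c) ^ 2 ≤ Λ ^ 2 := pow_le_pow_left₀ (by positivity) hlb 2
    have h2 : (p * c) ^ 2 = p / pn := by
      rw [mul_pow, hcsq]
      field_simp
    linarith
  have hhigh : Λ ^ 2 ≤ a * b / (pn * p) := by
    have h1 : Λ ^ 2 ≤ U ^ 2 := pow_le_pow_left₀ hΛpos.le hub' 2
    have h2 : U ^ 2 = a * b / (pn * p) := by
      rw [hU, mul_pow, mul_pow, Real.sq_sqrt hapos.le, Real.sq_sqrt hbpos.le, hcsq]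
      rw [div_eq_mul_inv]
    linarith
  have hEG : EG (Psi O φ) = - Real.logb 2 (Λ ^ 2) := by rw [hΛ]; rfl
  have hlog1 : Real.logb 2 (p / pn) ≤ Real.logb 2 (Λ ^ 2) :=
    (Real.logb_le_logb one_lt_two (by positivity) (by positivity)).2 hlow
  have hlog2 : Real.logb 2 (Λ ^ 2) ≤ Real.logb 2 (a * b / (pn * p)) :=
    (Real.logb_le_logb one_lt_two (by positivity) (by positivity)).2 hhigh
  have e1 : Real.logb 2 (p / pn) = Real.logb 2 p - Real.logb 2 pn :=
    Real.logb_div (ne_of_gt hppos) (ne_of_gt hpnpos)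
  have e2 : Real.logb 2 pn = (n : ℝ) * Real.logb 2 (Fintype.card G : ℝ) := by
    rw [hpn]
    exact Real.logb_pow 2 _ n
  have e3 : Real.logb 2 (a * b / (pn * p))
      = Real.logb 2 a + Real.logb 2 b - (Real.logb 2 pn + Real.logb 2 p) := by
    rw [Real.logb_div (by positivity) (by positivity),
      Real.logb_mul (ne_of_gt hapos) (ne_of_gt hbpos),
      Real.logb_mul (ne_of_gt hpnpos) (ne_of_gt hppos)]
  have e4 : Real.logb 2 (a * b / p)
      = Real.logb 2 a + Real.logb 2 b - Real.logb 2 p := by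
    rw [Real.logb_div (by positivity) (ne_of_gt hppos),
      Real.logb_mul (ne_of_gt hapos) (ne_of_gt hbpos)]
  constructor
  · rw [hEG, e4]
    linarith
  · rw [hEG]
    linarith


end GenForm
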